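/- For every integer k ≥ 1, the number of tuples (a₁, …, a_k) of non-negative integers satisfying a₁ + 2a₂ + ⋯ + k·a_k ≤ k is at least the binomial coefficient C(2⌊√k⌋, ⌊√k⌋). -/

import Mathlib

theorem stmt_8 (k : ℕ) (hk : 1 ≤ k) :
    Nat.choose (2 * Nat.sqrt k) (Nat.sqrt k) ≤
      Set.ncard {a : Fin k → ℕ | ∑ i : Fin k, (i.1 + 1) * a i ≤ k} := by
  set s := Nat.sqrt k with hs
  set S : Set (Fin k → ℕ) := {a : Fin k → ℕ | ∑ i : Fin k, (i.1 + 1) * a i ≤ k}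
  have hsk : s ≤ k := Nat.sqrt_le_self k
  have hss : s * s ≤ k := by have h := Nat.sqrt_le' k; rwa [pow_two] at h
  have hSfin : S.Finite := by
    have : S ⊆ Set.pi Set.univ (fun _ : Fin k => Set.Iic k) := by
      intro a ha i _
      simp only [Set.mem_Iic]
      calc a i ≤ (i.1 + 1) * a i := Nat.le_mul_of_pos_left _ (Nat.succ_pos _)
        _ ≤ ∑ j : Fin k, (j.1 + 1) * a j :=
          Finset.single_le_sum (f := fun j : Fin k => (j.1 + 1) * a j)
            (fun j _ => Nat.zero_le _) (Finset.mem_univ i)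
        _ ≤ k := ha
    exact (Set.Finite.pi fun _ => Set.finite_Iic k).subset this
  have hsumcount : ∀ (m : Multiset (Fin (s + 1))),
      ∑ j : Fin (s + 1), m.count j = Multiset.card m := by
    intro m
    rw [← Multiset.toFinset_sum_count_eq m]
    exact (Finset.sum_subset (Finset.subset_univ _)
      (fun x _ hx => Multiset.count_eq_zero.2 (fun h => hx (Multiset.mem_toFinset.2 h)))).symm
  set f : Sym (Fin (s + 1)) s → (Fin k → ℕ) := fun m i =>
    if h : i.1 + 1 < s + 1 then Multiset.count ⟨i.1 + 1, h⟩ m.val else 0 with hf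
  have hmem : ∀ m, f m ∈ S := by
    intro m
    have hcard : Multiset.card m.val = s := m.2
    show ∑ i : Fin k, (i.1 + 1) * f m i ≤ k
    set g : ℕ → ℕ := fun j => if h : j < s + 1 then s * Multiset.count ⟨j, h⟩ m.val else 0 with hg
    calc ∑ i : Fin k, (i.1 + 1) * f m i
        ≤ ∑ i : Fin k, g (i.1 + 1) := by
          apply Finset.sum_le_sum
          intro i _
          simp only [hf, hg]
          split
          · next h => exact Nat.mul_le_mul_right _ (Nat.lt_succ_iff.mp h)
          · simp
      _ = ∑ i ∈ Finset.range k, g (i + 1) := Fin.sum_univ_eq_sum_range (fun n => g (n + 1)) k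
      _ = ∑ i ∈ Finset.range s, g (i + 1) := by
          refine (Finset.sum_subset (Finset.range_subset_range.2 hsk) ?_).symm
          intro x _ hx
          simp only [Finset.mem_range, not_lt] at hx
          simp [hg, Nat.not_lt.2 (by omega : s + 1 ≤ x + 1)]
          intro h; omega
      _ ≤ ∑ j ∈ Finset.range (s + 1), g j := by
          rw [Finset.sum_range_succ']
          exact Nat.le_add_right _ _
      _ = ∑ j : Fin (s + 1), s * Multiset.count j m.val := by
          rw [← Fin.sum_univ_eq_sum_range (fun j => g j) (s + 1)]
          apply Finset.sum_congr rfl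
          intro j _
          simp [hg, j.2]
          intro h; have := j.2; omega
      _ = s * ∑ j : Fin (s + 1), Multiset.count j m.val := (Finset.mul_sum _ _ _).symm
      _ = s * s := by rw [hsumcount, hcard]
      _ ≤ k := hss
  have hinj : Function.Injective f := by
    intro m m' hmm
    apply Subtype.ext
    have hcard : Multiset.card m.val = Multiset.card m'.val := by rw [m.2, m'.2]
    have hcount : ∀ j : Fin (s + 1), 0 < j.1 → m.val.count j = m'.val.count j := by
      intro j hj
      have hjk : j.1 - 1 < k := by have := j.2; omega
      have := congrFun hmm ⟨j.1 - 1, hjk⟩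
      simp only [hf] at this
      have hlt : j.1 - 1 + 1 < s + 1 := by have := j.2; omega
      rw [dif_pos hlt, dif_pos hlt] at this
      have hj' : (⟨j.1 - 1 + 1, hlt⟩ : Fin (s + 1)) = j := by
        apply Fin.ext; simp; omega
      rwa [hj'] at this
    have hzero : m.val.count 0 = m'.val.count 0 := by
      have h1 := hsumcount m.val
      have h2 := hsumcount m'.val
      rw [← hcard] at h2
      rw [← h1] at h2
      rw [Fin.sum_univ_succ, Fin.sum_univ_succ] at h2
      have : ∑ i : Fin s, m.val.count i.succ = ∑ i : Fin s, m'.val.count i.succ := by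
        apply Finset.sum_congr rfl
        intro i _
        exact hcount i.succ (Nat.succ_pos _)
      omega
    ext j
    rcases Nat.eq_zero_or_pos j.1 with h | h
    · have : j = 0 := by apply Fin.ext; simpa using h
      rw [this]; exact hzero
    · exact hcount j h
  have := hSfin.fintype
  calc Nat.choose (2 * s) s = Fintype.card (Sym (Fin (s + 1)) s) := by
        rw [Sym.card_sym_eq_choose]
        congr 1
        simp [Fintype.card_fin]
        omega
    _ = Nat.card (Sym (Fin (s + 1)) s) := (Nat.card_eq_fintype_card).symm
    _ ≤ Nat.card S := Nat.card_le_card_of_injective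
        (fun m => (⟨f m, hmem m⟩ : S))
        (fun a b hab => hinj (congrArg Subtype.val hab))
    _ = S.ncard := Nat.card_coe_set_eq S
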